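/- arXiv:0806.0082 — 2 statements merged into one kernel-verified Lean document; each statement's English description precedes it below -/
import Mathlib

section
/- Let z ∈ ℝ³, s ≥ 0, a ≥ 0, and let u_∥, u_⊥ ∈ ℝ³ with u_∥ · u_⊥ = 0, and let ω ∈ ℝ³ be a unit vector with u_∥ · ω ≥ 0. Then |z - s·u_∥|² + |z - s·u_⊥ + aω|² ≥ |z|² + |z - s(u_∥ + u_⊥) + aω|². -/
open RealInnerProductSpace

abbrev E3 : Type := EuclideanSpace ℝ (Fin 3)

theorem gain_geometric_inequality_minus (z upar uperp ω : E3) (s a : ℝ)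
    (hs : 0 ≤ s) (ha : 0 ≤ a)
    (horth : ⟪upar, uperp⟫ = 0)
    (hω : ‖ω‖ = 1)
    (hpo : 0 ≤ ⟪upar, ω⟫) :
    ‖z - s • upar‖ ^ 2 + ‖z - s • uperp + a • ω‖ ^ 2 ≥
      ‖z‖ ^ 2 + ‖z - s • (upar + uperp) + a • ω‖ ^ 2 := by
  have h1 : ∀ v w : E3, ‖v + w‖ ^ 2 = ‖v‖ ^ 2 + 2 * ⟪v, w⟫ + ‖w‖ ^ 2 := fun v w => by
    rw [norm_add_sq_real]
  have h2 : ∀ v w : E3, ‖v - w‖ ^ 2 = ‖v‖ ^ 2 - 2 * ⟪v, w⟫ + ‖w‖ ^ 2 := fun v w => by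
    rw [norm_sub_sq_real]
  simp only [h1, h2, smul_add, norm_smul, inner_smul_left, inner_smul_right,
    inner_add_left, inner_add_right, inner_sub_left, inner_sub_right,
    RCLike.conj_to_real, Real.norm_eq_abs, mul_pow, sq_abs, hω]
  nlinarith [real_inner_comm upar uperp, real_inner_comm uperp ω, real_inner_comm upar ω,
    mul_nonneg (mul_nonneg hs ha) hpo]
end

section
/- Let q > 0 and z ∈ ℝ³. Then ∫_{ℝ³} |u|^{-1} e^{-q|z-u|²} du ≤ 4π + π/q^{3/2}. -/
open Real MeasureTheory

open Metric Set ENNReal in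
private lemma E3_volume_ball' (x : E3) (r : ℝ) (hr : 0 ≤ r) :
    volume (ball x r) = ENNReal.ofReal (4 * π / 3 * r ^ 3) := by
  have h : volume (ball x r) = ENNReal.ofReal r ^ 3 * ENNReal.ofReal (4 * π / 3) := by
    rw [EuclideanSpace.volume_ball (Fin 3) x r]
    simp only [Fintype.card_fin]
    congr 1
    have h32 : Real.Gamma (3/2) = (1/2) * Real.sqrt π := by
      rw [show (3:ℝ)/2 = 1/2 + 1 by norm_num, Real.Gamma_add_one (by norm_num),
        Real.Gamma_one_half_eq]
    rw [show ((3:ℕ):ℝ)/2 + 1 = 3/2 + 1 by norm_num, Real.Gamma_add_one (by norm_num), h32]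
    have hπ : (0:ℝ) < π := Real.pi_pos
    have hs : Real.sqrt π > 0 := Real.sqrt_pos.mpr hπ
    have h3 : Real.sqrt π ^ 3 = π * Real.sqrt π := by
      rw [pow_succ, sq_sqrt hπ.le]
    rw [h3]
    field_simp
    ring
  rw [h, ← ENNReal.ofReal_pow hr, ← ENNReal.ofReal_mul (by positivity)]
  ring_nf

open Metric Set ENNReal in
private lemma lint_ball_zero (ρ : ℝ) (hρ : 0 < ρ) :
    ∫⁻ u in ball (0:E3) ρ, ENNReal.ofReal ‖u‖⁻¹ ≤ ENNReal.ofReal (38 * π / 15 * ρ ^ 2) := by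
  set c : ℝ := 2/3 with hc
  have hc0 : 0 < c := by norm_num
  have hc1 : c < 1 := by norm_num
  set A : ℕ → Set E3 := fun k => ball 0 (ρ * c ^ k) \ ball 0 (ρ * c ^ (k+1)) with hA
  have hsub : ball (0:E3) ρ ⊆ {0} ∪ ⋃ k, A k := by
    intro u hu
    rcases eq_or_ne u 0 with h | h
    · exact Or.inl (by simp [h])
    · refine Or.inr ?_
      have hu0 : 0 < ‖u‖ := norm_pos_iff.mpr h
      have huρ : ‖u‖ < ρ := by simpa [mem_ball, dist_zero_right] using hu
      have hex : ∃ n, ρ * c ^ (n+1) ≤ ‖u‖ := by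
        obtain ⟨n, hn⟩ := exists_pow_lt_of_lt_one (div_pos hu0 hρ) hc1
        have hn' : c ^ n * ρ < ‖u‖ := (lt_div_iff₀ hρ).mp hn
        refine ⟨n, ?_⟩
        have hs : c ^ (n+1) = c ^ n * c := pow_succ c n
        nlinarith [pow_pos hc0 n]
      classical
      have hk1 : ρ * c ^ (Nat.find hex + 1) ≤ ‖u‖ := Nat.find_spec hex
      have hk2 : ‖u‖ < ρ * c ^ (Nat.find hex) := by
        rcases Nat.eq_zero_or_pos (Nat.find hex) with h0 | h0
        · rw [h0]; simpa using huρ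
        · have hlt := Nat.find_min hex (Nat.sub_lt h0 one_pos)
          push_neg at hlt
          have : Nat.find hex - 1 + 1 = Nat.find hex := by omega
          rwa [this] at hlt
      refine mem_iUnion.mpr ⟨Nat.find hex, ?_⟩
      constructor
      · simpa [mem_ball, dist_zero_right] using hk2
      · simpa [mem_ball, dist_zero_right, not_lt] using hk1
  have hAk : ∀ k, ∫⁻ u in A k, ENNReal.ofReal ‖u‖⁻¹ ≤
      ENNReal.ofReal (38 * π / 27 * ρ ^ 2 * (4/9) ^ k) := by
    intro k
    have hr' : 0 < ρ * c ^ (k+1) := by positivity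
    have hstep : ∫⁻ u in A k, ENNReal.ofReal ‖u‖⁻¹ ≤
        ∫⁻ _ in A k, ENNReal.ofReal (ρ * c ^ (k+1))⁻¹ := by
      refine setLIntegral_mono measurable_const (fun u hu => ?_)
      refine ENNReal.ofReal_le_ofReal ?_
      have : ρ * c ^ (k+1) ≤ ‖u‖ := by
        have := hu.2
        simpa [mem_ball, dist_zero_right, not_lt] using this
      exact inv_anti₀ hr' this
    rw [setLIntegral_const] at hstep
    have hvol : volume (A k) = ENNReal.ofReal
        (4 * π / 3 * ((ρ * c ^ k) ^ 3 - (ρ * c ^ (k+1)) ^ 3)) := by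
      rw [hA]
      have hss : ball (0:E3) (ρ * c ^ (k+1)) ⊆ ball 0 (ρ * c ^ k) := by
        apply ball_subset_ball
        have h1 : c ^ (k+1) ≤ c ^ k := pow_le_pow_of_le_one hc0.le hc1.le (by omega)
        nlinarith
      rw [measure_diff hss measurableSet_ball.nullMeasurableSet
        (by rw [E3_volume_ball' _ _ hr'.le]; exact ENNReal.ofReal_ne_top),
        E3_volume_ball' _ _ (by positivity), E3_volume_ball' _ _ hr'.le,
        ← ENNReal.ofReal_sub _ (by positivity)]
      ring_nf
    calc ∫⁻ u in A k, ENNReal.ofReal ‖u‖⁻¹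
        ≤ ENNReal.ofReal (ρ * c ^ (k+1))⁻¹ * volume (A k) := hstep
      _ = ENNReal.ofReal (38 * π / 27 * ρ ^ 2 * (4/9) ^ k) := by
          rw [hvol, ← ENNReal.ofReal_mul (by positivity)]
          congr 1
          have hxpos : (0:ℝ) < c ^ k := pow_pos hc0 k
          have hs : c ^ (k+1) = c ^ k * c := pow_succ c k
          have hx2 : ((4:ℝ)/9) ^ k = (c ^ k) ^ 2 := by
            rw [show (4:ℝ)/9 = c ^ 2 by rw [hc]; norm_num, ← pow_mul, mul_comm, pow_mul]
          rw [hs, hx2, hc]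
          have h23 : ((2:ℝ)/3) ≠ 0 := by norm_num
          field_simp
          ring
  calc ∫⁻ u in ball (0:E3) ρ, ENNReal.ofReal ‖u‖⁻¹
      ≤ ∫⁻ u in ({0} ∪ ⋃ k, A k), ENNReal.ofReal ‖u‖⁻¹ := lintegral_mono_set hsub
    _ ≤ (∫⁻ u in ({0}:Set E3), ENNReal.ofReal ‖u‖⁻¹) + ∫⁻ u in (⋃ k, A k), ENNReal.ofReal ‖u‖⁻¹ :=
        lintegral_union_le _ _ _
    _ ≤ 0 + ∑' k, ∫⁻ u in A k, ENNReal.ofReal ‖u‖⁻¹ := by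
        gcongr
        · exact le_of_eq (setLIntegral_measure_zero _ _ (measure_singleton 0))
        · exact lintegral_iUnion_le _ _
    _ ≤ ∑' k, ENNReal.ofReal (38 * π / 27 * ρ ^ 2 * (4/9) ^ k) := by
        rw [zero_add]; exact ENNReal.tsum_le_tsum hAk
    _ = ENNReal.ofReal (∑' k : ℕ, 38 * π / 27 * ρ ^ 2 * (4/9) ^ k) := by
        rw [ENNReal.ofReal_tsum_of_nonneg (fun k => by positivity)
          (Summable.mul_left _ (summable_geometric_of_lt_one (by norm_num) (by norm_num)))]
    _ = ENNReal.ofReal (38 * π / 15 * ρ ^ 2) := by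
        rw [tsum_mul_left, tsum_geometric_of_lt_one (by norm_num) (by norm_num)]
        congr 1
        norm_num
        ring

open Metric Set ENNReal in
private lemma lint_ball (z : E3) (ρ : ℝ) (hρ : 0 < ρ) :
    ∫⁻ u in ball z ρ, ENNReal.ofReal ‖u‖⁻¹ ≤ ENNReal.ofReal (38 * π / 15 * ρ ^ 2) := by
  have hm2 : MeasurableSet (ball z ρ \ ball 0 ρ) := measurableSet_ball.diff measurableSet_ball
  have hm3 : MeasurableSet (ball (0:E3) ρ \ ball z ρ) := measurableSet_ball.diff measurableSet_ball
  have hfin : volume (ball z ρ ∩ ball 0 ρ) ≠ ⊤ := by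
    refine ne_top_of_le_ne_top ?_ (measure_mono inter_subset_right)
    rw [E3_volume_ball' _ _ hρ.le]; exact ENNReal.ofReal_ne_top
  have hvol23 : volume (ball z ρ \ ball 0 ρ) = volume (ball (0:E3) ρ \ ball z ρ) := by
    have h2 := measure_inter_add_diff (μ := volume) (ball z ρ)
      (measurableSet_ball (x := (0:E3)) (ε := ρ))
    have h3 := measure_inter_add_diff (μ := volume) (ball (0:E3) ρ)
      (measurableSet_ball (x := z) (ε := ρ))
    rw [E3_volume_ball' _ _ hρ.le] at h2 h3
    rw [inter_comm] at h3
    rw [← h3] at h2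
    exact (ENNReal.add_right_inj hfin).mp h2
  have hdisj1 : Disjoint (ball z ρ ∩ ball 0 ρ) (ball z ρ \ ball 0 ρ) :=
    disjoint_sdiff_self_right.mono_left inter_subset_right
  have hdisj2 : Disjoint (ball (0:E3) ρ ∩ ball z ρ) (ball (0:E3) ρ \ ball z ρ) :=
    disjoint_sdiff_self_right.mono_left inter_subset_right
  have hsplit : ∫⁻ u in ball z ρ, ENNReal.ofReal ‖u‖⁻¹ =
      (∫⁻ u in ball z ρ ∩ ball 0 ρ, ENNReal.ofReal ‖u‖⁻¹) +
        ∫⁻ u in ball z ρ \ ball 0 ρ, ENNReal.ofReal ‖u‖⁻¹ := by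
    have h := lintegral_union (μ := volume) (f := fun u : E3 => ENNReal.ofReal ‖u‖⁻¹) hm2 hdisj1
    rw [inter_union_diff] at h
    exact h
  have hsplit0 : ∫⁻ u in ball (0:E3) ρ, ENNReal.ofReal ‖u‖⁻¹ =
      (∫⁻ u in ball (0:E3) ρ ∩ ball z ρ, ENNReal.ofReal ‖u‖⁻¹) +
        ∫⁻ u in ball (0:E3) ρ \ ball z ρ, ENNReal.ofReal ‖u‖⁻¹ := by
    have h := lintegral_union (μ := volume) (f := fun u : E3 => ENNReal.ofReal ‖u‖⁻¹) hm3 hdisj2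
    rw [inter_union_diff] at h
    exact h
  have h2le : ∫⁻ u in ball z ρ \ ball 0 ρ, ENNReal.ofReal ‖u‖⁻¹ ≤
      ENNReal.ofReal ρ⁻¹ * volume (ball z ρ \ ball 0 ρ) := by
    rw [← setLIntegral_const]
    refine setLIntegral_mono measurable_const (fun u hu => ?_)
    refine ENNReal.ofReal_le_ofReal ?_
    have : ρ ≤ ‖u‖ := by
      have := hu.2
      simpa [mem_ball, dist_zero_right, not_lt] using this
    exact inv_anti₀ hρ this
  have h3ge : ENNReal.ofReal ρ⁻¹ * volume (ball (0:E3) ρ \ ball z ρ) ≤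
      ∫⁻ u in ball (0:E3) ρ \ ball z ρ, ENNReal.ofReal ‖u‖⁻¹ := by
    rw [← setLIntegral_const]
    refine setLIntegral_mono_ae' hm3 ?_
    have h0 : ∀ᵐ u : E3, u ∉ ({0} : Set E3) :=
      (measure_eq_zero_iff_ae_notMem).mp (measure_singleton 0)
    filter_upwards [h0] with u hu0 huS3
    refine ENNReal.ofReal_le_ofReal ?_
    have hu0' : u ≠ 0 := by simpa using hu0
    have hun : 0 < ‖u‖ := norm_pos_iff.mpr hu0'
    have : ‖u‖ < ρ := by
      have := huS3.1
      simpa [mem_ball, dist_zero_right] using this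
    exact inv_anti₀ hun this.le
  calc ∫⁻ u in ball z ρ, ENNReal.ofReal ‖u‖⁻¹
      = _ := hsplit
    _ ≤ (∫⁻ u in ball z ρ ∩ ball 0 ρ, ENNReal.ofReal ‖u‖⁻¹) +
        ENNReal.ofReal ρ⁻¹ * volume (ball z ρ \ ball 0 ρ) := by gcongr
    _ = (∫⁻ u in ball (0:E3) ρ ∩ ball z ρ, ENNReal.ofReal ‖u‖⁻¹) +
        ENNReal.ofReal ρ⁻¹ * volume (ball (0:E3) ρ \ ball z ρ) := by rw [hvol23, inter_comm]
    _ ≤ (∫⁻ u in ball (0:E3) ρ ∩ ball z ρ, ENNReal.ofReal ‖u‖⁻¹) +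
        ∫⁻ u in ball (0:E3) ρ \ ball z ρ, ENNReal.ofReal ‖u‖⁻¹ := by gcongr
    _ = ∫⁻ u in ball (0:E3) ρ, ENNReal.ofReal ‖u‖⁻¹ := hsplit0.symm
    _ ≤ ENNReal.ofReal (38 * π / 15 * ρ ^ 2) := lint_ball_zero ρ hρ

open Metric Set ENNReal in
private lemma exp_layer {q : ℝ} (hq : 0 < q) (a : ℝ) :
    ∫ t in Ioi a, q * Real.exp (-(q * t)) = Real.exp (-(q * a)) := by
  have hderiv : ∀ x ∈ Ici a, HasDerivAt (fun t : ℝ => -Real.exp (-(q * t)))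
      (q * Real.exp (-(q * x))) x := by
    intro x _
    have h1 : HasDerivAt (fun t : ℝ => -(q * t)) (-q) x := by
      have h := ((hasDerivAt_id x).const_mul q).neg; simp only [mul_one] at h; exact h
    have h3 := ((Real.hasDerivAt_exp (-(q * x))).comp x h1).neg
    exact h3.congr_deriv (by ring)
  have hint : IntegrableOn (fun x : ℝ => q * Real.exp (-(q * x))) (Ioi a) := by
    have := (exp_neg_integrableOn_Ioi a hq).const_mul q
    simpa [neg_mul, IntegrableOn] using this
  have htend : Filter.Tendsto (fun t : ℝ => -Real.exp (-(q * t))) Filter.atTop (nhds 0) := by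
    rw [show (0:ℝ) = -0 by norm_num]
    refine Filter.Tendsto.neg ?_
    refine Real.tendsto_exp_atBot.comp ?_
    exact Filter.tendsto_neg_atTop_atBot.comp (Filter.tendsto_id.const_mul_atTop hq)
  have h := integral_Ioi_of_hasDerivAt_of_tendsto' hderiv hint htend
  rw [h]
  simp

open Metric Set ENNReal in
private lemma main_lint (q : ℝ) (hq : 0 < q) (z : E3) :
    ∫⁻ u : E3, ENNReal.ofReal (‖u‖⁻¹ * Real.exp (-q * ‖z - u‖ ^ 2)) ≤
      ENNReal.ofReal (38 * π / 15 / q) := by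
  classical
  set S : Set (E3 × ℝ) := {p | ‖z - p.1‖ ^ 2 < p.2} with hS
  have hSmeas : MeasurableSet S := by
    have h1 : Measurable fun p : E3 × ℝ => ‖z - p.1‖ ^ 2 :=
      ((measurable_const.sub measurable_fst).norm.pow_const 2)
    exact measurableSet_lt h1 measurable_snd
  set F : E3 × ℝ → ℝ≥0∞ := fun p => ENNReal.ofReal ‖p.1‖⁻¹ *
    S.indicator (fun p : E3 × ℝ => ENNReal.ofReal (q * Real.exp (-(q * p.2)))) p with hF
  have hFmeas : Measurable F := by
    refine (measurable_fst.norm.inv.ennreal_ofReal).mul (Measurable.indicator ?_ hSmeas)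
    exact ((measurable_snd.const_mul q).neg.exp.const_mul q).ennreal_ofReal
  have hlayer : ∀ u : E3, ENNReal.ofReal (‖u‖⁻¹ * Real.exp (-q * ‖z - u‖ ^ 2)) =
      ∫⁻ t in Ioi (0:ℝ), F (u, t) := by
    intro u
    have ha : (0:ℝ) ≤ ‖z - u‖ ^ 2 := sq_nonneg _
    have hind : ∀ t : ℝ, F (u, t) = ENNReal.ofReal ‖u‖⁻¹ *
        (Ioi (‖z - u‖ ^ 2)).indicator (fun t => ENNReal.ofReal (q * Real.exp (-(q * t)))) t := by
      intro t
      rw [hF]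
      simp only [Set.indicator_apply, hS, mem_setOf_eq, mem_Ioi]
    simp_rw [hind]
    rw [lintegral_const_mul' _ _ ENNReal.ofReal_ne_top,
      lintegral_indicator measurableSet_Ioi, Measure.restrict_restrict measurableSet_Ioi,
      Ioi_inter_Ioi, sup_eq_left.mpr ha,
      ← ofReal_integral_eq_lintegral_ofReal
        (IntegrableOn.congr_fun ((exp_neg_integrableOn_Ioi _ hq).const_mul q)
          (fun x _ => by rw [neg_mul]) measurableSet_Ioi)
        (Filter.Eventually.of_forall (fun t => by positivity)),
      exp_layer hq, ← ENNReal.ofReal_mul (by positivity)]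
    congr 1
    rw [neg_mul]
  have hswap : ∫⁻ u : E3, ∫⁻ t in Ioi (0:ℝ), F (u, t) =
      ∫⁻ t in Ioi (0:ℝ), ∫⁻ u : E3, F (u, t) := by
    exact lintegral_lintegral_swap hFmeas.aemeasurable
  have hinner : ∀ t : ℝ, t ∈ Ioi (0:ℝ) → (∫⁻ u : E3, F (u, t)) ≤
      ENNReal.ofReal (38 * π / 15 * (q * (t * Real.exp (-(q * t))))) := by
    intro t ht
    have ht0 : 0 < t := ht
    have hsq : 0 < Real.sqrt t := Real.sqrt_pos.mpr ht0
    have hball : ∀ u : E3, F (u, t) = (ball z (Real.sqrt t)).indicator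
        (fun u : E3 => ENNReal.ofReal ‖u‖⁻¹ * ENNReal.ofReal (q * Real.exp (-(q * t)))) u := by
      intro u
      rw [hF]
      simp only [Set.indicator_apply, hS, mem_setOf_eq, mem_ball]
      have : dist u z < Real.sqrt t ↔ ‖z - u‖ ^ 2 < t := by
        rw [dist_comm, dist_eq_norm, ← neg_sub, norm_neg]
        exact Real.lt_sqrt (norm_nonneg _)
      rcases lt_or_ge (‖z - u‖ ^ 2) t with h | h
      · rw [if_pos h, if_pos (this.mpr h)]
      · rw [if_neg (not_lt.mpr h), if_neg (by rw [this]; exact not_lt.mpr h), mul_zero]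
    simp_rw [hball]
    rw [lintegral_indicator measurableSet_ball,
      lintegral_mul_const' _ _ ENNReal.ofReal_ne_top]
    calc (∫⁻ u in ball z (Real.sqrt t), ENNReal.ofReal ‖u‖⁻¹) *
          ENNReal.ofReal (q * Real.exp (-(q * t)))
        ≤ ENNReal.ofReal (38 * π / 15 * Real.sqrt t ^ 2) *
          ENNReal.ofReal (q * Real.exp (-(q * t))) := by
          gcongr
          exact lint_ball z _ hsq
      _ = ENNReal.ofReal (38 * π / 15 * (q * (t * Real.exp (-(q * t))))) := by
          rw [← ENNReal.ofReal_mul (by positivity), Real.sq_sqrt ht0.le]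
          congr 1
          ring
  have hfinal : ∫⁻ t in Ioi (0:ℝ),
      ENNReal.ofReal (38 * π / 15 * (q * (t * Real.exp (-(q * t))))) =
      ENNReal.ofReal (38 * π / 15 / q) := by
    have hint : IntegrableOn (fun t : ℝ => t * Real.exp (-(q * t))) (Ioi 0) := by
      have h := integrableOn_rpow_mul_exp_neg_mul_rpow (s := 1) (p := 1)
        (by norm_num) (by norm_num) hq
      refine h.congr_fun (fun x hx => ?_) measurableSet_Ioi
      simp only [Real.rpow_one, neg_mul]
    have hval : ∫ t in Ioi (0:ℝ), t * Real.exp (-(q * t)) = (1/q) ^ 2 := by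
      have h := integral_rpow_mul_exp_neg_mul_Ioi (a := 2) (r := q) (by norm_num) hq
      rw [Real.Gamma_two, mul_one] at h
      rw [show ((1:ℝ)/q) ^ 2 = (1/q) ^ (2:ℝ) by
        rw [← Real.rpow_natCast (1/q) 2]; norm_num]
      rw [← h]
      refine setIntegral_congr_fun measurableSet_Ioi (fun x hx => ?_)
      rw [show (2:ℝ) - 1 = 1 by norm_num, Real.rpow_one]
    have hnn : 0 ≤ᵐ[volume.restrict (Ioi (0:ℝ))]
        fun t : ℝ => 38 * π / 15 * (q * (t * Real.exp (-(q * t)))) := by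
      filter_upwards [ae_restrict_mem measurableSet_Ioi] with t ht
      have h1 : (0:ℝ) < t := ht
      have h2 : (0:ℝ) ≤ Real.exp (-(q * t)) := (Real.exp_pos _).le
      have : (0:ℝ) ≤ 38 * π / 15 := by positivity
      exact mul_nonneg this (mul_nonneg hq.le (mul_nonneg h1.le h2))
    rw [← ofReal_integral_eq_lintegral_ofReal
      (IntegrableOn.congr_fun ((hint.const_mul q).const_mul (38 * π / 15))
        (fun x _ => by ring) measurableSet_Ioi)
      hnn]
    congr 1
    rw [show (fun t : ℝ => 38 * π / 15 * (q * (t * Real.exp (-(q * t))))) =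
      (fun t : ℝ => (38 * π / 15 * q) * (t * Real.exp (-(q * t)))) by funext t; ring]
    rw [integral_const_mul, hval]
    field_simp
  calc ∫⁻ u : E3, ENNReal.ofReal (‖u‖⁻¹ * Real.exp (-q * ‖z - u‖ ^ 2))
      = ∫⁻ u : E3, ∫⁻ t in Ioi (0:ℝ), F (u, t) := by simp_rw [hlayer]
    _ = ∫⁻ t in Ioi (0:ℝ), ∫⁻ u : E3, F (u, t) := hswap
    _ ≤ ∫⁻ t in Ioi (0:ℝ),
          ENNReal.ofReal (38 * π / 15 * (q * (t * Real.exp (-(q * t))))) :=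
        setLIntegral_mono' measurableSet_Ioi hinner
    _ = ENNReal.ofReal (38 * π / 15 / q) := hfinal

theorem inverse_norm_gaussian_integral_bound (q : ℝ) (hq : 0 < q) (z : E3) :
    ∫ u : E3, ‖u‖⁻¹ * Real.exp (-q * ‖z - u‖ ^ 2) ≤
      4 * π + π / q ^ ((3 : ℝ) / 2) := by
  have hmeas : AEStronglyMeasurable
      (fun u : E3 => ‖u‖⁻¹ * Real.exp (-q * ‖z - u‖ ^ 2)) volume := by
    refine Measurable.aestronglyMeasurable ?_
    exact (measurable_norm.inv).mul
      ((((measurable_const.sub measurable_id).norm.pow_const 2).const_mul (-q)).exp)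
  have hnn : 0 ≤ᵐ[volume] fun u : E3 => ‖u‖⁻¹ * Real.exp (-q * ‖z - u‖ ^ 2) :=
    Filter.Eventually.of_forall (fun u => by positivity)
  rw [MeasureTheory.integral_eq_lintegral_of_nonneg_ae hnn hmeas]
  set y := Real.sqrt q with hy'
  have hy : 0 < y := Real.sqrt_pos.mpr hq
  have hq' : y ^ 2 = q := Real.sq_sqrt hq.le
  have hrw : q ^ ((3:ℝ)/2) = y ^ 3 := by
    calc q ^ ((3:ℝ)/2) = (q ^ ((1:ℝ)/2)) ^ (3:ℕ) := by
          rw [← Real.rpow_natCast (q ^ ((1:ℝ)/2)) 3, ← Real.rpow_mul hq.le]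
          norm_num
      _ = y ^ 3 := by rw [hy', Real.sqrt_eq_rpow]
  have key : (0:ℝ) ≤ 60 * y ^ 3 + 15 - 38 * y := by
    nlinarith [mul_nonneg hy.le (sq_nonneg (y - 1/2)), sq_nonneg (y - 53/120), hy.le]
  have hreal : 38 * π / 15 / q ≤ 4 * π + π / q ^ ((3:ℝ)/2) := by
    rw [hrw, ← hq', ← sub_nonneg]
    have hexpand : 4 * π + π / y ^ 3 - 38 * π / 15 / y ^ 2 =
        π * (60 * y ^ 3 + 15 - 38 * y) / (15 * y ^ 3) := by
      field_simp
      ring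
    rw [hexpand]
    exact div_nonneg (mul_nonneg Real.pi_pos.le key) (by positivity)
  have hRHSnn : (0:ℝ) ≤ 4 * π + π / q ^ ((3:ℝ)/2) := by
    have h1 : (0:ℝ) < q ^ ((3:ℝ)/2) := Real.rpow_pos_of_pos hq _
    have h2 : (0:ℝ) < π := Real.pi_pos
    positivity
  refine ENNReal.toReal_le_of_le_ofReal hRHSnn ?_
  exact (main_lint q hq z).trans (ENNReal.ofReal_le_ofReal hreal)
end
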